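/- arXiv:2012.12357 — 2 statements merged into one kernel-verified Lean document; each statement's English description precedes it below -/
import Mathlib

section
/- Let n be a positive integer and let v : (0,T) × ℝ → ℝ be C^1 in t and C^3 in x, with continuous mixed derivatives v_{tx}, v_{txx}, satisfying (CH_n) pointwise. Then for all (t,x) ∈ (0,T) × ℝ the energy-density identity ∂_t( (v² + v_x²)/2 ) + ∂_x[ ((n+1)/2) v^{n+2} + ((1−n)/2) v^n v_x² − v^{n+1} v_{xx} − v v_{tx} ] = 0 holds. -/
open Real MeasureTheory Filter Topology Metric
open scoped ENNReal

/-- `v_x`. -/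
noncomputable def ux (v : ℝ → ℝ → ℝ) (t x : ℝ) : ℝ := deriv (v t) x
/-- `v_{xx}`. -/
noncomputable def uxx (v : ℝ → ℝ → ℝ) (t x : ℝ) : ℝ := deriv (deriv (v t)) x
/-- `v_{xxx}`. -/
noncomputable def uxxx (v : ℝ → ℝ → ℝ) (t x : ℝ) : ℝ := deriv (deriv (deriv (v t))) x
/-- `v_t`. -/
noncomputable def ut (v : ℝ → ℝ → ℝ) (t x : ℝ) : ℝ := deriv (fun s => v s x) t
/-- `v_{tx}`. -/
noncomputable def utx (v : ℝ → ℝ → ℝ) (t x : ℝ) : ℝ := deriv (fun s => ux v s x) t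
/-- `v_{txx}`. -/
noncomputable def utxx (v : ℝ → ℝ → ℝ) (t x : ℝ) : ℝ := deriv (fun s => uxx v s x) t

/-- The equation (CH_n) holds pointwise at `(t,x)`. -/
def CHn (n : ℕ) (v : ℝ → ℝ → ℝ) (t x : ℝ) : Prop :=
  ut v t x - utxx v t x
      + (((n : ℝ) + 1) * ((n : ℝ) + 2) / 2) * v t x ^ n * ux v t x
    = ((n : ℝ) * ((n : ℝ) - 1) / 2) * v t x ^ (n - 2) * ux v t x ^ 3
      + 2 * (n : ℝ) * v t x ^ (n - 1) * ux v t x * uxx v t x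
      + v t x ^ n * uxxx v t x

/-- The open time interval `(0, T)`, where `T ∈ (0, ∞]`. -/
def timeDomainOpen (T : ℝ≥0∞) : Set ℝ := {t : ℝ | 0 < t ∧ ENNReal.ofReal t < T}


lemma isOpen_timeDomainOpen (T : ℝ≥0∞) : IsOpen (timeDomainOpen T) := by
  have : timeDomainOpen T = Set.Ioi 0 ∩ (fun t : ℝ => ENNReal.ofReal t) ⁻¹' (Set.Iio T) := rfl
  rw [this]
  exact isOpen_Ioi.inter (isOpen_Iio.preimage ENNReal.continuous_ofReal)

section
variable {T : ℝ≥0∞} {v : ℝ → ℝ → ℝ}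

lemma hux_eq (t : ℝ) : ux v t = deriv (v t) := rfl
lemma huxx_eq (t : ℝ) : uxx v t = deriv (deriv (v t)) := rfl

lemma contDiff2_deriv (h : ContDiff ℝ 3 (v t)) : ContDiff ℝ 2 (deriv (v t)) := by
  have h' : ContDiff ℝ ((2 : ℕ) + 1) (v t) := by exact_mod_cast h
  exact (contDiff_succ_iff_deriv.1 h').2.2

lemma contDiff1_deriv2 (h : ContDiff ℝ 3 (v t)) : ContDiff ℝ 1 (deriv (deriv (v t))) := by
  have h' : ContDiff ℝ ((1 : ℕ) + 1) (deriv (v t)) := by exact_mod_cast contDiff2_deriv h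
  exact (contDiff_succ_iff_deriv.1 h').2.2

-- HasDerivAt facts in x
lemma hasDerivAt_v (h : ContDiff ℝ 3 (v t)) (y : ℝ) : HasDerivAt (v t) (ux v t y) y :=
  ((h.differentiable (by norm_num)) y).hasDerivAt

lemma hasDerivAt_ux (h : ContDiff ℝ 3 (v t)) (y : ℝ) :
    HasDerivAt (fun z => ux v t z) (uxx v t y) y :=
  (((contDiff2_deriv h).differentiable (by norm_num)) y).hasDerivAt

lemma hasDerivAt_uxx (h : ContDiff ℝ 3 (v t)) (y : ℝ) :
    HasDerivAt (fun z => uxx v t z) (uxxx v t y) y :=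
  (((contDiff1_deriv2 h).differentiable (by norm_num)) y).hasDerivAt

lemma cont_uxx (h : ContDiff ℝ 3 (v t)) : Continuous (fun z => uxx v t z) :=
  (contDiff1_deriv2 h).continuous

end

lemma cont_utxx_slice
    (hcont_utxx : ContinuousOn (fun p : ℝ × ℝ => utxx v p.1 p.2) (timeDomainOpen T ×ˢ Set.univ))
    {t : ℝ} (htd : t ∈ timeDomainOpen T) : Continuous (fun z => utxx v t z) := by
  rw [continuous_iff_continuousAt]
  intro z
  have hopen : IsOpen (timeDomainOpen T ×ˢ (Set.univ : Set ℝ)) :=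
    (isOpen_timeDomainOpen T).prod isOpen_univ
  have h1 : ContinuousAt (fun p : ℝ × ℝ => utxx v p.1 p.2) (t, z) :=
    hcont_utxx.continuousAt (hopen.mem_nhds ⟨htd, Set.mem_univ _⟩)
  exact h1.comp (Continuous.continuousAt (by fun_prop))

lemma utx_hasDerivAt
    (hx : ∀ t ∈ timeDomainOpen T, ContDiff ℝ 3 (v t))
    (htx : ∀ x : ℝ, ∀ t ∈ timeDomainOpen T, DifferentiableAt ℝ (fun s => ux v s x) t)
    (htxx : ∀ x : ℝ, ∀ t ∈ timeDomainOpen T, DifferentiableAt ℝ (fun s => uxx v s x) t)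
    (hcont_utxx : ContinuousOn (fun p : ℝ × ℝ => utxx v p.1 p.2) (timeDomainOpen T ×ˢ Set.univ))
    {t : ℝ} (htd : t ∈ timeDomainOpen T) (x : ℝ) :
    HasDerivAt (fun y => utx v t y) (utxx v t x) x := by
  obtain ⟨ε, hε, hball⟩ := Metric.isOpen_iff.1 (isOpen_timeDomainOpen T) t htd
  have hcb : closedBall t (ε/2) ⊆ timeDomainOpen T :=
    (closedBall_subset_ball (by linarith)).trans hball
  have hctxx : Continuous (fun z => utxx v t z) := cont_utxx_slice hcont_utxx htd
  -- key integral representation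
  have key : ∀ y : ℝ, utx v t y = utx v t 0 + ∫ z in (0:ℝ)..y, utxx v t z := by
    intro y
    -- FTC in x for each time s in the domain
    have hFTC : ∀ s ∈ timeDomainOpen T, (∫ z in (0:ℝ)..y, uxx v s z) = ux v s y - ux v s 0 := by
      intro s hs
      have hcd := hx s hs
      have : (∫ z in (0:ℝ)..y, uxx v s z) = ux v s y - ux v s 0 := by
        apply intervalIntegral.integral_eq_sub_of_hasDerivAt
        · exact fun z _ => hasDerivAt_ux hcd z
        · exact (cont_uxx hcd).intervalIntegrable _ _
      exact this
    -- bound on a compact set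
    obtain ⟨C, hC⟩ : ∃ C, ∀ p ∈ closedBall t (ε/2) ×ˢ Set.uIcc (0:ℝ) y,
        ‖utxx v p.1 p.2‖ ≤ C :=
      ((isCompact_closedBall t (ε/2)).prod isCompact_uIcc).exists_bound_of_continuousOn
        (hcont_utxx.mono (Set.prod_mono hcb (Set.subset_univ _)))
    -- differentiation under the integral sign
    have hder : HasDerivAt (fun s => ∫ z in (0:ℝ)..y, uxx v s z)
        (∫ z in (0:ℝ)..y, utxx v t z) t := by
      have hε2 : (0:ℝ) < ε/2 := by linarith
      refine (intervalIntegral.hasDerivAt_integral_of_dominated_loc_of_deriv_le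
        (F := fun s z => uxx v s z) (F' := fun s z => utxx v s z)
        (bound := fun _ => C) (ball_mem_nhds t hε2) ?_ ?_ ?_ ?_ ?_ ?_).2
      · filter_upwards [(isOpen_timeDomainOpen T).mem_nhds htd] with s hs
        exact (cont_uxx (hx s hs)).aestronglyMeasurable.restrict
      · exact (cont_uxx (hx t htd)).intervalIntegrable _ _
      · exact hctxx.aestronglyMeasurable.restrict
      · refine Filter.Eventually.of_forall (fun z hz s hs => ?_)
        exact hC (s, z) ⟨ball_subset_closedBall hs, Set.uIoc_subset_uIcc hz⟩
      · exact intervalIntegrable_const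
      · refine Filter.Eventually.of_forall (fun z _ s hs => ?_)
        exact (htxx z s (hcb (ball_subset_closedBall hs))).hasDerivAt
    -- derivative of the explicit difference
    have hder2 : HasDerivAt (fun s => ux v s y - ux v s 0) (utx v t y - utx v t 0) t :=
      (htx y t htd).hasDerivAt.sub (htx 0 t htd).hasDerivAt
    have heq : (fun s => ∫ z in (0:ℝ)..y, uxx v s z) =ᶠ[𝓝 t] fun s => ux v s y - ux v s 0 := by
      filter_upwards [(isOpen_timeDomainOpen T).mem_nhds htd] with s hs using hFTC s hs
    have := (hder2.congr_of_eventuallyEq heq).unique hder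
    linarith [this]
  have hfun : (fun y => utx v t y) = fun y => utx v t 0 + ∫ z in (0:ℝ)..y, utxx v t z :=
    funext fun y => key y
  rw [hfun]
  refine HasDerivAt.const_add _ ?_
  exact intervalIntegral.integral_hasDerivAt_right (hctxx.intervalIntegrable _ _)
    ⟨Set.univ, Filter.univ_mem, hctxx.aestronglyMeasurable.restrict⟩ hctxx.continuousAt

/-- The energy-density identity
`∂ₜ((v² + v_x²)/2) + ∂ₓ[((n+1)/2) v^{n+2} + ((1-n)/2) vⁿ v_x² - v^{n+1} v_{xx} - v v_{tx}] = 0`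
for classical solutions of (CH_n). -/
theorem energy_density_identity
    (n : ℕ) (hn : 0 < n) (T : ℝ≥0∞) (v : ℝ → ℝ → ℝ)
    (hx : ∀ t ∈ timeDomainOpen T, ContDiff ℝ 3 (v t))
    (ht : ∀ x : ℝ, ∀ t ∈ timeDomainOpen T, DifferentiableAt ℝ (fun s => v s x) t)
    (htx : ∀ x : ℝ, ∀ t ∈ timeDomainOpen T, DifferentiableAt ℝ (fun s => ux v s x) t)
    (htxx : ∀ x : ℝ, ∀ t ∈ timeDomainOpen T, DifferentiableAt ℝ (fun s => uxx v s x) t)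
    (hcont_ut : ContinuousOn (fun p : ℝ × ℝ => ut v p.1 p.2) (timeDomainOpen T ×ˢ Set.univ))
    (hcont_utx : ContinuousOn (fun p : ℝ × ℝ => utx v p.1 p.2) (timeDomainOpen T ×ˢ Set.univ))
    (hcont_utxx : ContinuousOn (fun p : ℝ × ℝ => utxx v p.1 p.2) (timeDomainOpen T ×ˢ Set.univ))
    (hpde : ∀ t ∈ timeDomainOpen T, ∀ x : ℝ, CHn n v t x) :
    ∀ t ∈ timeDomainOpen T, ∀ x : ℝ,
      deriv (fun s => (v s x ^ 2 + ux v s x ^ 2) / 2) t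
        + deriv (fun y => (((n : ℝ) + 1) / 2) * v t y ^ (n + 2)
            + ((1 - (n : ℝ)) / 2) * v t y ^ n * ux v t y ^ 2
            - v t y ^ (n + 1) * uxx v t y
            - v t y * utx v t y) x = 0 := by
  intro t htd x
  have hcd := hx t htd
  have h1 : HasDerivAt (fun s => v s x) (ut v t x) t := (ht x t htd).hasDerivAt
  have h2 : HasDerivAt (fun s => ux v s x) (utx v t x) t := (htx x t htd).hasDerivAt
  have hT : HasDerivAt (fun s => (v s x ^ 2 + ux v s x ^ 2) / 2)
      (((2:ℕ) * v t x ^ (2-1) * ut v t x + (2:ℕ) * ux v t x ^ (2-1) * utx v t x) / 2) t :=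
    ((h1.pow 2).add (h2.pow 2)).div_const 2
  have hv' := fun y => hasDerivAt_v hcd y
  have hux' := fun y => hasDerivAt_ux hcd y
  have huxx' := fun y => hasDerivAt_uxx hcd y
  have hutx' := utx_hasDerivAt hx htx htxx hcont_utxx htd x
  have hA : HasDerivAt (fun y => (((n:ℝ)+1)/2) * v t y ^ (n+2))
      ((((n:ℝ)+1)/2) * (((n+2 : ℕ) : ℝ) * v t x ^ (n+2-1) * ux v t x)) x :=
    ((hv' x).pow (n+2)).const_mul _
  have hB : HasDerivAt (fun y => ((1-(n:ℝ))/2) * v t y ^ n * ux v t y ^ 2)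
      ((((1-(n:ℝ))/2) * (((n : ℕ) : ℝ) * v t x ^ (n-1) * ux v t x)) * ux v t x ^ 2
        + (((1-(n:ℝ))/2) * v t x ^ n) * (((2:ℕ) : ℝ) * ux v t x ^ (2-1) * uxx v t x)) x :=
    (((hv' x).pow n).const_mul _).mul ((hux' x).pow 2)
  have hC : HasDerivAt (fun y => v t y ^ (n+1) * uxx v t y)
      ((((n+1 : ℕ) : ℝ) * v t x ^ (n+1-1) * ux v t x) * uxx v t x
        + v t x ^ (n+1) * uxxx v t x) x :=
    ((hv' x).pow (n+1)).mul (huxx' x)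
  have hD : HasDerivAt (fun y => v t y * utx v t y)
      (ux v t x * utx v t x + v t x * utxx v t x) x := (hv' x).mul hutx'
  have hX : HasDerivAt (fun y => (((n : ℝ) + 1) / 2) * v t y ^ (n + 2)
            + ((1 - (n : ℝ)) / 2) * v t y ^ n * ux v t y ^ 2
            - v t y ^ (n + 1) * uxx v t y
            - v t y * utx v t y) _ x := ((hA.add hB).sub hC).sub hD
  rw [hT.deriv, hX.deriv]
  have hp := hpde t htd x
  unfold CHn at hp
  obtain ⟨m, rfl⟩ : ∃ m, n = m + 1 := ⟨n-1, (Nat.succ_pred_eq_of_pos hn).symm⟩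
  rcases m with _ | k
  · norm_num at hp ⊢
    linear_combination v t x * hp
  · simp only [show k+1+1-2 = k from by omega, show k+1+1-1 = k+1 from by omega,
      show k+1+1+2-1 = k+3 from by omega, show k+1+1+1-1 = k+2 from by omega,
      show 2-1 = 1 from by omega] at hp ⊢
    push_cast at hp ⊢
    linear_combination v t x * hp
end

section
/- Let n be a positive integer, let h : ℝ → ℝ be continuously differentiable, and let ε ∈ {1,−1}. Then the function u(t,x) := h(t) e^{εx} satisfies the equation (CH_n) pointwise on ℝ × ℝ: u_t − u_{txx} + ((n+1)(n+2)/2) u^n u_x = (n(n−1)/2) u^{n−2} u_x³ + 2n u^{n−1} u_x u_{xx} + u^n u_{xxx} for all (t,x). -/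
open Real MeasureTheory Filter Topology
open scoped ENNReal

/-- For any `C¹` function `h` and `ε = ±1`, the function
`u(t,x) = h(t) e^{εx}` satisfies (CH_n) pointwise on `ℝ × ℝ`. -/
theorem exponential_profiles_solve_CHn
    (n : ℕ) (hn : 0 < n) (h : ℝ → ℝ) (hh : ContDiff ℝ 1 h)
    (ε : ℝ) (hε : ε = 1 ∨ ε = -1) :
    ∀ t x : ℝ, CHn n (fun s y => h s * Real.exp (ε * y)) t x := by
  have hdh : Differentiable ℝ h := hh.differentiable one_ne_zero
  have hε2 : ε * ε = 1 := by rcases hε with rfl | rfl <;> norm_num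
  have hd : ∀ (c : ℝ) (y : ℝ), HasDerivAt (fun z => c * Real.exp (ε * z))
      (ε * c * Real.exp (ε * y)) y := by
    intro c y
    have := (((hasDerivAt_id y).const_mul ε).exp).const_mul c
    simp only [id_eq] at this
    refine this.congr_deriv ?_
    ring
  have hderiv : ∀ c : ℝ, deriv (fun z => c * Real.exp (ε * z))
      = fun z => (ε * c) * Real.exp (ε * z) := by
    intro c; funext y; exact (hd c y).deriv
  intro t x
  have hux : ∀ s y, ux (fun s y => h s * Real.exp (ε * y)) s y
      = ε * h s * Real.exp (ε * y) := by
    intro s y; simp only [ux, hderiv (h s)]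
  have huxx : ∀ s y, uxx (fun s y => h s * Real.exp (ε * y)) s y
      = h s * Real.exp (ε * y) := by
    intro s y
    simp only [uxx, hderiv (h s), hderiv (ε * h s)]
    rw [show ε * (ε * h s) = h s by rw [← mul_assoc, hε2, one_mul]]
  have huxxx : ∀ s y, uxxx (fun s y => h s * Real.exp (ε * y)) s y
      = ε * h s * Real.exp (ε * y) := by
    intro s y
    simp only [uxxx, hderiv (h s), hderiv (ε * h s)]
    rw [show ε * (ε * h s) = h s by rw [← mul_assoc, hε2, one_mul], hderiv (h s)]
  have hut : ut (fun s y => h s * Real.exp (ε * y)) t x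
      = deriv h t * Real.exp (ε * x) := by
    simp only [ut]
    exact deriv_mul_const (hdh t) _
  have hutxx : utxx (fun s y => h s * Real.exp (ε * y)) t x
      = deriv h t * Real.exp (ε * x) := by
    simp only [utxx]
    have : (fun s => uxx (fun s y => h s * Real.exp (ε * y)) s x)
        = fun s => h s * Real.exp (ε * x) := by
      funext s; exact huxx s x
    rw [this]
    exact deriv_mul_const (hdh t) _
  simp only [CHn, hut, hutxx, hux, huxx, huxxx]
  set u : ℝ := h t * Real.exp (ε * x) with hu
  have h1 : ε * h t * Real.exp (ε * x) = ε * u := by rw [hu]; ring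
  rw [h1]
  obtain ⟨m, rfl⟩ : ∃ m, n = m + 1 := ⟨n - 1, (Nat.succ_pred_eq_of_pos hn).symm⟩
  rcases m with _ | k
  · push_cast
    have hε3 : ε * ε * ε = ε := by rw [hε2, one_mul]
    simp only [pow_one, pow_zero]
    nlinarith [hε2, sq_nonneg u, sq_nonneg ε]
  · have e1 : k + 1 + 1 - 2 = k := rfl
    have e2 : k + 1 + 1 - 1 = k + 1 := rfl
    rw [e1, e2]
    have hε3 : ε * ε * ε = ε := by rw [hε2, one_mul]
    push_cast
    have expand : (ε * u) ^ 3 = ε * u ^ 3 := by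
      have : (ε * u) ^ 3 = (ε * ε * ε) * u ^ 3 := by ring
      rw [this, hε3]
    rw [expand]
    have pA : u ^ (k + 1 + 1) * u = u ^ (k + 3) := by rw [← pow_succ]
    have pB : u ^ k * u ^ 3 = u ^ (k + 3) := by rw [← pow_add]
    have pC : u ^ (k + 1) * u * u = u ^ (k + 3) := by rw [← pow_succ, ← pow_succ]
    linear_combination ((((k:ℝ) + 3) * ((k:ℝ) + 4) / 2 - 1) * ε) * pA
      - ((((k:ℝ) + 2) * ((k:ℝ) + 1) / 2) * ε) * pB - (2 * ((k:ℝ) + 2) * ε) * pC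
end
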